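/- arXiv:1811.12770 — 3 statements merged into one kernel-verified Lean document; each statement's English description precedes it below -/
import Mathlib

section
/- Optimizing the bound ‖u‖_2^2 ≤ A R^d + B R^{-2} over R > 0, where A = (2π)^{-d} ω_d ‖u‖_1^2 and B = ‖∇u‖_2^2, yields Nash's inequality ‖u‖_2^{2+4/d} ≤ C_2(d) ‖u‖_1^{4/d} ‖∇u‖_2^2 with C_2(d) = (1/(4π)) ((d+2)/d)^{1+2/d} Γ(d/2)^{-2/d}. -/
open MeasureTheory Real

noncomputable def nrm (d : ℕ) (u : EuclideanSpace ℝ (Fin d) → ℝ) (q : ℝ) : ℝ :=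
  (eLpNorm u (ENNReal.ofReal q) volume).toReal

noncomputable def gradNrm (d : ℕ) (u : EuclideanSpace ℝ (Fin d) → ℝ) : ℝ :=
  (eLpNorm (fun x => ‖fderiv ℝ u x‖) 2 volume).toReal

set_option maxHeartbeats 1000000 in
/-- Optimizing `‖u‖₂² ≤ A R^d + B R^{-2}` over `R > 0`, with
`A = (2π)^{-d} ω_d ‖u‖₁²` and `B = ‖∇u‖₂²`, `ω_d = π^{d/2}/Γ(d/2+1)`, yields Nash's
inequality with constant `C₂(d) = (1/(4π)) ((d+2)/d)^{1+2/d} Γ(d/2)^{-2/d}`. -/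
theorem nash_from_fourier_optimization (d : ℕ) (hd : 1 ≤ d)
    (u : EuclideanSpace ℝ (Fin d) → ℝ)
    (hu1 : MemLp u 1 volume) (hu2 : MemLp u 2 volume)
    (hgrad : MemLp (fun x => ‖fderiv ℝ u x‖) 2 volume)
    (A B : ℝ)
    (hA : A = (2 * π) ^ (-(d : ℝ)) * (π ^ ((d : ℝ) / 2) / Real.Gamma ((d : ℝ) / 2 + 1))
            * nrm d u 1 ^ 2)
    (hB : B = gradNrm d u ^ 2)
    (hbound : ∀ R : ℝ, 0 < R → nrm d u 2 ^ 2 ≤ A * R ^ (d : ℝ) + B * R ^ (-(2 : ℝ))) :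
    nrm d u 2 ^ ((2 : ℝ) + 4 / d) ≤
      (1 / (4 * π)) * (((d : ℝ) + 2) / d) ^ ((1 : ℝ) + 2 / d)
        * Real.Gamma ((d : ℝ) / 2) ^ (-(2 : ℝ) / d)
        * nrm d u 1 ^ ((4 : ℝ) / d) * gradNrm d u ^ 2 := by
  have hd0 : (0:ℝ) < d := by exact_mod_cast hd
  have hd2 : (0:ℝ) < (d:ℝ) + 2 := by linarith
  have hn1 : 0 ≤ nrm d u 1 := ENNReal.toReal_nonneg
  have hn2 : 0 ≤ nrm d u 2 := ENNReal.toReal_nonneg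
  have hg : 0 ≤ gradNrm d u := ENNReal.toReal_nonneg
  have hΓ : 0 < Real.Gamma ((d:ℝ)/2) := Real.Gamma_pos_of_pos (by positivity)
  have hΓ1 : 0 < Real.Gamma ((d:ℝ)/2 + 1) := Real.Gamma_pos_of_pos (by positivity)
  have hπ := Real.pi_pos
  rcases eq_or_lt_of_le hn2 with h0 | hn2pos
  · rw [← h0, Real.zero_rpow (by positivity)]
    positivity
  -- main case: nrm 2 > 0
  have hA0 : 0 ≤ A := by rw [hA]; positivity
  have hB0 : 0 ≤ B := by rw [hB]; positivity
  have hApos : 0 < A := by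
    rcases hA0.lt_or_eq with h | h; · exact h
    exfalso
    set R : ℝ := Real.sqrt (B / nrm d u 2 ^ 2) + 1 with hR
    have hRpos : 0 < R := by positivity
    have hb := hbound R hRpos
    rw [← h, zero_mul, zero_add, Real.rpow_neg hRpos.le, Real.rpow_two] at hb
    have hR2 : B / nrm d u 2 ^ 2 < R ^ 2 := by
      have h1 : 0 ≤ B / nrm d u 2 ^ 2 := by positivity
      have h2 := Real.sq_sqrt h1
      nlinarith [Real.sqrt_nonneg (B / nrm d u 2 ^ 2)]
    have hlt : B < R ^ 2 * nrm d u 2 ^ 2 := (div_lt_iff₀ (by positivity)).mp hR2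
    have : B * (R ^ 2)⁻¹ < nrm d u 2 ^ 2 := by
      calc B * (R ^ 2)⁻¹ < (R ^ 2 * nrm d u 2 ^ 2) * (R ^ 2)⁻¹ :=
            mul_lt_mul_of_pos_right hlt (by positivity)
        _ = nrm d u 2 ^ 2 := by field_simp
    linarith
  have hBpos : 0 < B := by
    rcases hB0.lt_or_eq with h | h; · exact h
    exfalso
    set R : ℝ := (nrm d u 2 ^ 2 / (2 * A)) ^ ((1:ℝ)/d) with hRdef
    have hx : 0 < nrm d u 2 ^ 2 / (2 * A) := by positivity
    have hRpos : 0 < R := Real.rpow_pos_of_pos hx _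
    have hb := hbound R hRpos
    have hRd : R ^ (d:ℝ) = nrm d u 2 ^ 2 / (2 * A) := by
      rw [hRdef, ← Real.rpow_mul hx.le]
      rw [show (1:ℝ)/d * d = 1 by field_simp, Real.rpow_one]
    rw [← h, zero_mul, add_zero, hRd] at hb
    have heq : A * (nrm d u 2 ^ 2 / (2 * A)) = nrm d u 2 ^ 2 / 2 := by
      field_simp
    rw [heq] at hb
    have := pow_pos hn2pos 2
    linarith
  -- optimal R
  set s : ℝ := (d:ℝ)/((d:ℝ)+2) with hs
  set K : ℝ := ((2/d) * B) / A with hKdef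
  have hK : 0 < K := by positivity
  set R₀ : ℝ := K ^ ((1:ℝ)/((d:ℝ)+2)) with hR₀
  have hR₀pos : 0 < R₀ := Real.rpow_pos_of_pos hK _
  have hb := hbound R₀ hR₀pos
  have e1 : R₀ ^ (d:ℝ) = K ^ s := by
    rw [hR₀, ← Real.rpow_mul hK.le]; congr 1; rw [hs]; ring
  have e2 : R₀ ^ (-(2:ℝ)) = K ^ (s - 1) := by
    rw [hR₀, ← Real.rpow_mul hK.le]; congr 1; rw [hs]; field_simp; ring
  rw [e1, e2] at hb
  have h2d : (0:ℝ) < 2/(d:ℝ) := by positivity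
  have hKt : ∀ t : ℝ, K ^ t = (2/d)^t * B^t * A^(-t) := by
    intro t
    rw [hKdef, Real.div_rpow (by positivity) hApos.le,
      Real.mul_rpow h2d.le hBpos.le, Real.rpow_neg hApos.le]
    ring
  have t1 : A * K ^ s = (2/(d:ℝ))^s * B^s * A^(1-s) := by
    rw [hKt s,
      show A * ((2/(d:ℝ))^s * B^s * A^(-s)) = (2/(d:ℝ))^s * B^s * (A^(1:ℝ) * A^(-s)) by
        rw [Real.rpow_one]; ring,
      ← Real.rpow_add hApos]
    ring_nf
  have t2 : B * K ^ (s-1) = ((d:ℝ)/2) * ((2/(d:ℝ))^s * B^s * A^(1-s)) := by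
    rw [hKt (s-1), Real.rpow_sub h2d, Real.rpow_one,
      show B * ((2/(d:ℝ))^s/(2/(d:ℝ)) * B^(s-1) * A^(-(s-1)))
          = (2/(d:ℝ))^s/(2/(d:ℝ)) * (B^(1:ℝ) * B^(s-1)) * A^(-(s-1)) by
        rw [Real.rpow_one]; ring,
      ← Real.rpow_add hBpos,
      show (1:ℝ) + (s-1) = s by ring, show -(s-1) = 1-s by ring]
    field_simp
  have hM : A * K ^ s + B * K ^ (s-1)
      = (((d:ℝ)+2)/2) * ((2/(d:ℝ))^s * B^s * A^(1-s)) := by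
    rw [t1, t2]; ring
  rw [hM] at hb
  -- raise to power p = (d+2)/d
  set p : ℝ := ((d:ℝ)+2)/(d:ℝ) with hp
  have hppos : 0 < p := by positivity
  have key := Real.rpow_le_rpow (by positivity) hb hppos.le
  have lhs_eq : (nrm d u 2 ^ 2) ^ p = nrm d u 2 ^ ((2:ℝ) + 4/d) := by
    rw [← Real.rpow_two, ← Real.rpow_mul hn2]
    congr 1; rw [hp]; field_simp; try ring
  have rhs_eq : ((((d:ℝ)+2)/2) * ((2/(d:ℝ))^s * B^s * A^(1-s))) ^ p
      = (((d:ℝ)+2)/2) ^ p * (2/(d:ℝ)) * B * A ^ ((2:ℝ)/d) := by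
    rw [Real.mul_rpow (by positivity) (by positivity),
      Real.mul_rpow (by positivity) (by positivity),
      Real.mul_rpow (by positivity) (by positivity),
      ← Real.rpow_mul h2d.le, ← Real.rpow_mul hBpos.le, ← Real.rpow_mul hApos.le,
      show s * p = 1 by rw [hs, hp]; field_simp; try ring,
      show (1-s) * p = 2/(d:ℝ) by rw [hs, hp]; field_simp; try ring,
      Real.rpow_one, Real.rpow_one]
    ring
  rw [lhs_eq, rhs_eq] at key
  refine key.trans_eq ?_
  -- now pure constant manipulation
  have hn1pos : 0 < nrm d u 1 := by
    rcases hn1.lt_or_eq with h | h; · exact h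
    exfalso; rw [← h] at hA; simp at hA; nlinarith
  -- A^(2/d)
  have hA2d : A ^ ((2:ℝ)/d)
      = (1/(4*π)) * ((d:ℝ)/2) ^ (-(2:ℝ)/d) * Real.Gamma ((d:ℝ)/2) ^ (-(2:ℝ)/d)
        * nrm d u 1 ^ ((4:ℝ)/d) := by
    rw [hA, Real.Gamma_add_one (by positivity : ((d:ℝ)/2) ≠ 0)]
    rw [Real.mul_rpow (by positivity) (by positivity),
      Real.mul_rpow (by positivity) (by positivity),
      ← Real.rpow_natCast (nrm d u 1) 2,
      ← Real.rpow_mul (by positivity : (0:ℝ) ≤ 2*π),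
      ← Real.rpow_mul hn1,
      Real.div_rpow (by positivity) (by positivity),
      Real.mul_rpow (by positivity) hΓ.le,
      ← Real.rpow_mul hπ.le,
      show -(d:ℝ) * (2/d) = -2 by field_simp; try ring,
      show (d:ℝ)/2 * (2/d) = 1 by field_simp; try ring,
      show ((2:ℕ):ℝ) * (2/(d:ℝ)) = 4/d by push_cast; ring,
      Real.rpow_one,
      Real.rpow_neg (by positivity : (0:ℝ) ≤ 2*π),
      Real.rpow_two]
    rw [show -(2:ℝ)/(d:ℝ) = -((2:ℝ)/d) by ring,
      Real.rpow_neg (by positivity : (0:ℝ) ≤ (d:ℝ)/2),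
      Real.rpow_neg hΓ.le]
    have hp1 : (0:ℝ) < ((d:ℝ)/2) ^ ((2:ℝ)/d) := Real.rpow_pos_of_pos (by positivity) _
    have hp2 : (0:ℝ) < Real.Gamma ((d:ℝ)/2) ^ ((2:ℝ)/d) := Real.rpow_pos_of_pos hΓ _
    field_simp
    ring
  rw [hA2d, hB]
  rw [show (1:ℝ) + 2/(d:ℝ) = p by rw [hp]; field_simp]
  have hc : (((d:ℝ)+2)/2) ^ p * (2/(d:ℝ)) * ((d:ℝ)/2) ^ (-(2:ℝ)/d)
      = (((d:ℝ)+2)/(d:ℝ)) ^ p := by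
    have e3 : (2/(d:ℝ)) * ((d:ℝ)/2) ^ (-(2:ℝ)/d) = ((d:ℝ)/2) ^ (-p) := by
      rw [show -p = -1 + (-(2:ℝ)/d) by rw [hp]; field_simp; ring,
        Real.rpow_add (by positivity), Real.rpow_neg_one]
      congr 1
      rw [inv_div]
    rw [mul_assoc, e3, Real.rpow_neg (by positivity), ← div_eq_mul_inv,
      ← Real.div_rpow (by positivity) (by positivity)]
    congr 1
    field_simp
  calc (((d:ℝ)+2)/2) ^ p * (2/(d:ℝ)) * gradNrm d u ^ 2
        * ((1/(4*π)) * ((d:ℝ)/2) ^ (-(2:ℝ)/d) * Real.Gamma ((d:ℝ)/2) ^ (-(2:ℝ)/d)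
          * nrm d u 1 ^ ((4:ℝ)/d))
      = ((((d:ℝ)+2)/2) ^ p * (2/(d:ℝ)) * ((d:ℝ)/2) ^ (-(2:ℝ)/d))
        * (1/(4*π)) * Real.Gamma ((d:ℝ)/2) ^ (-(2:ℝ)/d)
          * nrm d u 1 ^ ((4:ℝ)/d) * gradNrm d u ^ 2 := by ring
    _ = 1/(4*π) * (((d:ℝ)+2)/(d:ℝ)) ^ p * Real.Gamma ((d:ℝ)/2) ^ (-(2:ℝ)/d)
          * nrm d u 1 ^ ((4:ℝ)/d) * gradNrm d u ^ 2 := by rw [hc]; ring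
end

section
/- Let u be a nonzero function in L^1(ℝ^d) ∩ L^2(ℝ^d). Then log(‖u‖_2^2 / ‖u‖_1) ≤ ∫_{ℝ^d} log|u| · |u|^2 dx / ‖u‖_2^2, provided the right-hand integral exists. -/
open MeasureTheory Real

/-- Beckner's Jensen-inequality observation: for a nonzero `u ∈ L¹ ∩ L²(ℝ^d)`,
`log(‖u‖₂²/‖u‖₁) ≤ (∫ log|u| · |u|² dx) / ‖u‖₂²`, provided the integral exists. -/
theorem beckner_jensen (d : ℕ) (hd : 1 ≤ d)
    (u : EuclideanSpace ℝ (Fin d) → ℝ)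
    (hu1 : MemLp u 1 volume) (hu2 : MemLp u 2 volume)
    (hne : nrm d u 2 ≠ 0)
    (hint : Integrable (fun x => Real.log |u x| * (u x) ^ 2) volume) :
    Real.log (nrm d u 2 ^ 2 / nrm d u 1) ≤
      (∫ x, Real.log |u x| * (u x) ^ 2) / nrm d u 2 ^ 2 := by
  have hu1' : Integrable u volume := memLp_one_iff_integrable.mp hu1
  have habs : Integrable (fun x => |u x|) volume := hu1'.abs
  have hsq : Integrable (fun x => (u x) ^ 2) volume := hu2.integrable_sq
  -- identify norms with integrals
  have h2 : (ENNReal.ofReal (2:ℝ)) = 2 := by norm_num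
  have h1 : (ENNReal.ofReal (1:ℝ)) = 1 := by norm_num
  have hI2nn : (0:ℝ) ≤ ∫ x, (u x) ^ 2 := integral_nonneg fun x => sq_nonneg _
  have hN2 : nrm d u 2 ^ 2 = ∫ x, (u x) ^ 2 := by
    have heq := hu2.eLpNorm_eq_integral_rpow_norm two_ne_zero ENNReal.ofNat_ne_top
    have hkey : ∫ a, ‖u a‖ ^ ENNReal.toReal 2 = ∫ x, (u x) ^ 2 :=
      integral_congr_ae (ae_of_all _ fun x => by
        simp [Real.rpow_natCast, abs_sq])
    have hnn : (0:ℝ) ≤ ∫ a, ‖u a‖ ^ ENNReal.toReal 2 :=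
      integral_nonneg fun x => by positivity
    have h3 : nrm d u 2 = (∫ x, (u x) ^ 2) ^ ((2:ℝ))⁻¹ := by
      rw [nrm, h2, heq, ENNReal.toReal_ofReal (Real.rpow_nonneg hnn _), hkey,
        ENNReal.toReal_ofNat]
    rw [h3, ← Real.rpow_natCast ((∫ x, (u x) ^ 2) ^ ((2:ℝ))⁻¹) 2,
      ← Real.rpow_mul hI2nn]
    norm_num
  have hN1 : nrm d u 1 = ∫ x, |u x| := by
    have := hu1.eLpNorm_eq_integral_rpow_norm one_ne_zero ENNReal.one_ne_top
    rw [nrm, h1, this, ENNReal.toReal_ofReal (by positivity)]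
    simp [Real.norm_eq_abs]
  set I2 : ℝ := ∫ x, (u x) ^ 2 with hI2def
  set I1 : ℝ := ∫ x, |u x| with hI1def
  have hI2pos : 0 < I2 := by
    have hpos : 0 < nrm d u 2 := lt_of_le_of_ne ENNReal.toReal_nonneg (Ne.symm hne)
    rw [← hN2]; positivity
  have hI1pos : 0 < I1 := by
    rcases lt_or_eq_of_le (integral_nonneg (fun x => abs_nonneg (u x)) : (0:ℝ) ≤ I1) with h | h
    · exact h
    · exfalso
      have hzero : u =ᵐ[volume] 0 := by
        have := (integral_eq_zero_iff_of_nonneg (fun x => abs_nonneg (u x)) habs).mp h.symm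
        filter_upwards [this] with x hx
        simp only [Pi.zero_apply] at hx ⊢
        exact abs_eq_zero.mp hx
      apply hne
      rw [nrm, h2, eLpNorm_congr_ae hzero, eLpNorm_zero]
      simp
  set c : ℝ := I2 / I1 with hcdef
  have hcpos : 0 < c := div_pos hI2pos hI1pos
  -- pointwise inequality
  have hpt : ∀ x, (Real.log c + 1) * (u x) ^ 2 - c * |u x| ≤ Real.log |u x| * (u x) ^ 2 := by
    intro x
    by_cases hx : u x = 0
    · simp [hx]
    · have ha : 0 < |u x| := abs_pos.mpr hx
      have hlog : Real.log (c / |u x|) ≤ c / |u x| - 1 :=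
        Real.log_le_sub_one_of_pos (div_pos hcpos ha)
      rw [Real.log_div (ne_of_gt hcpos) (ne_of_gt ha)] at hlog
      have hmul : (Real.log c - Real.log |u x|) * (u x)^2 ≤ (c / |u x| - 1) * (u x)^2 :=
        mul_le_mul_of_nonneg_right hlog (sq_nonneg _)
      have hsq' : (u x)^2 = |u x|^2 := (sq_abs _).symm
      have hdiv : c / |u x| * (u x)^2 = c * |u x| := by
        rw [hsq', sq, ← mul_assoc, div_mul_cancel₀ _ (ne_of_gt ha)]
      nlinarith
  -- integrate
  have hlhs : Integrable (fun x => (Real.log c + 1) * (u x) ^ 2 - c * |u x|) volume :=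
    (hsq.const_mul _).sub (habs.const_mul c)
  have hmono : ∫ x, ((Real.log c + 1) * (u x) ^ 2 - c * |u x|) ≤
      ∫ x, Real.log |u x| * (u x) ^ 2 :=
    integral_mono hlhs hint hpt
  have hcalc : ∫ x, ((Real.log c + 1) * (u x) ^ 2 - c * |u x|) =
      (Real.log c + 1) * I2 - c * I1 := by
    rw [integral_sub (hsq.const_mul _) (habs.const_mul c),
      integral_const_mul, integral_const_mul]
  have hcI1 : c * I1 = I2 := div_mul_cancel₀ _ (ne_of_gt hI1pos)
  rw [hN2, hN1]
  rw [le_div_iff₀ hI2pos]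
  calc Real.log (I2 / I1) * I2 = (Real.log c + 1) * I2 - c * I1 := by
        rw [hcI1]; ring
    _ ≤ ∫ x, Real.log |u x| * (u x) ^ 2 := by rw [← hcalc]; exact hmono
end

section
/- Assume the logarithmic Sobolev inequality in scale-invariant form: for all u ∈ H^1(ℝ^d) with u ≠ 0, ∫ log|u| · |u|^2 dx / ‖u‖_2^2 ≤ log‖u‖_2 + (d/4) log( (2/(π d e)) ‖∇u‖_2^2/‖u‖_2^2 ). Then Nash's inequality holds with constant C_1(d) = 2/(π d e): ‖u‖_2^{2+4/d} ≤ (2/(π d e)) ‖u‖_1^{4/d} ‖∇u‖_2^2 for all u ∈ H^1(ℝ^d) ∩ L^1(ℝ^d). -/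
open MeasureTheory Real

lemma nrm_two_sq {d : ℕ} {u : EuclideanSpace ℝ (Fin d) → ℝ} (hu : MemLp u 2 volume) :
    nrm d u 2 ^ 2 = ∫ x, u x ^ 2 := by
  have h2 : (ENNReal.ofReal (2:ℝ)) = 2 := by norm_num
  have hI : 0 ≤ ∫ x, ‖u x‖ ^ ((2:ENNReal)).toReal := by
    apply integral_nonneg; intro x; positivity
  rw [nrm, h2, hu.eLpNorm_eq_integral_rpow_norm two_ne_zero ENNReal.ofNat_ne_top,
    ENNReal.toReal_ofReal (by positivity)]
  rw [← Real.rpow_natCast _ 2, ← Real.rpow_mul hI]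
  norm_num

lemma nrm_one_eq {d : ℕ} {u : EuclideanSpace ℝ (Fin d) → ℝ} (hu : MemLp u 1 volume) :
    nrm d u 1 = ∫ x, |u x| := by
  have h1 : (ENNReal.ofReal (1:ℝ)) = 1 := by norm_num
  rw [nrm, h1, hu.eLpNorm_eq_integral_rpow_norm one_ne_zero ENNReal.one_ne_top,
    ENNReal.toReal_ofReal (by positivity)]
  norm_num [Real.norm_eq_abs]

/-- pointwise bound used in the Jensen step -/
lemma pointwise_log_bound (t a : ℝ) (ha : 0 < a) (ht : 0 ≤ t) :
    (1 - Real.log a) * t ^ 2 - a⁻¹ * t ≤ Real.log t * t ^ 2 := by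
  rcases eq_or_lt_of_le ht with h | ht
  · simp [← h]
  · have hta : 0 < t * a := mul_pos ht ha
    have h1 : Real.log (t * a)⁻¹ ≤ (t * a)⁻¹ - 1 :=
      Real.log_le_sub_one_of_pos (by positivity)
    rw [Real.log_inv] at h1
    have h1' : 1 - (t * a)⁻¹ ≤ Real.log t + Real.log a := by
      rw [← Real.log_mul (ne_of_gt ht) (ne_of_gt ha)]; linarith
    have h2 : 0 ≤ (Real.log t + Real.log a - (1 - (t * a)⁻¹)) * t ^ 2 :=
      mul_nonneg (by linarith) (sq_nonneg t)
    have key : (t * a)⁻¹ * t ^ 2 = a⁻¹ * t := by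
      field_simp
    nlinarith [h2, key]

set_option maxHeartbeats 1000000 in
/-- If the scale-invariant logarithmic Sobolev inequality holds on `H¹(ℝ^d)`, then Nash's
inequality holds with constant `C₁(d) = 2/(π d e)`. -/
theorem nash_from_logSobolev (d : ℕ) (hd : 1 ≤ d)
    (hLogSob : ∀ u : EuclideanSpace ℝ (Fin d) → ℝ,
      Differentiable ℝ u → MemLp u 2 volume →
      MemLp (fun x => ‖fderiv ℝ u x‖) 2 volume → u ≠ 0 →
      (∫ x, Real.log |u x| * (u x) ^ 2) / nrm d u 2 ^ 2 ≤
        Real.log (nrm d u 2)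
          + ((d : ℝ) / 4) * Real.log ((2 / (π * d * Real.exp 1))
              * gradNrm d u ^ 2 / nrm d u 2 ^ 2)) :
    ∀ u : EuclideanSpace ℝ (Fin d) → ℝ,
      Differentiable ℝ u → MemLp u 2 volume →
      MemLp (fun x => ‖fderiv ℝ u x‖) 2 volume → MemLp u 1 volume →
      nrm d u 2 ^ ((2 : ℝ) + 4 / d) ≤
        (2 / (π * d * Real.exp 1)) * nrm d u 1 ^ ((4 : ℝ) / d) * gradNrm d u ^ 2 := by
  intro u hdiff hu2 hgrad hu1
  have hdR : (0:ℝ) < d := by exact_mod_cast hd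
  set C : ℝ := 2 / (π * d * Real.exp 1) with hC
  have hCpos : 0 < C := by
    rw [hC]; positivity
  -- trivial case ‖u‖₂ = 0
  rcases eq_or_lt_of_le (show (0:ℝ) ≤ nrm d u 2 from ENNReal.toReal_nonneg) with hN2 | hN2
  · rw [← hN2, Real.zero_rpow (by positivity)]
    have : 0 ≤ nrm d u 1 ^ ((4:ℝ)/d) := Real.rpow_nonneg ENNReal.toReal_nonneg _
    positivity
  -- now ‖u‖₂ > 0
  set N2 : ℝ := nrm d u 2 with hN2def
  set N1 : ℝ := nrm d u 1 with hN1def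
  set G : ℝ := gradNrm d u with hGdef
  have hune : u ≠ 0 := by
    intro h
    rw [hN2def] at hN2
    rw [h] at hN2
    simp [nrm, eLpNorm_zero] at hN2
  have huint : Integrable u volume := memLp_one_iff_integrable.mp hu1
  have husq : Integrable (fun x => u x ^ 2) volume := by
    have := (memLp_two_iff_integrable_sq hu2.aestronglyMeasurable).mp hu2
    simpa [Pi.pow_apply] using this
  have hN2sq : N2 ^ 2 = ∫ x, u x ^ 2 := nrm_two_sq hu2
  have hN1eq : N1 = ∫ x, |u x| := nrm_one_eq hu1
  have hN1 : 0 < N1 := by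
    rcases eq_or_lt_of_le (show (0:ℝ) ≤ N1 from ENNReal.toReal_nonneg) with h | h
    · exfalso
      have h0 : ∫ x, |u x| = 0 := by rw [← hN1eq, ← h]
      have habs : Integrable (fun x => |u x|) volume := huint.abs
      have : (fun x => |u x|) =ᵐ[volume] 0 := by
        rw [← integral_eq_zero_iff_of_nonneg (fun x => abs_nonneg _) habs]
        exact h0
      have hu0 : u =ᵐ[volume] 0 := by
        filter_upwards [this] with x hx
        simpa using abs_eq_zero.mp hx
      have hz : eLpNorm u 2 volume = 0 := by
        rw [eLpNorm_congr_ae hu0, eLpNorm_zero]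
      have hzz : N2 = 0 := by
        rw [hN2def, nrm, show (ENNReal.ofReal (2:ℝ)) = 2 by norm_num, hz]
        simp
      linarith
    · exact h
  set I : ℝ := ∫ x, Real.log |u x| * (u x) ^ 2 with hIdef
  -- Case: the entropy integrand is not integrable
  by_cases hInt : Integrable (fun x => Real.log |u x| * (u x) ^ 2) volume
  swap
  · exfalso
    set K : ℝ := Real.log N2 + ((d:ℝ)/4) * Real.log (C * G ^ 2 / N2 ^ 2) with hKdef
    set c : ℝ := Real.exp (-K - 1) with hcdef
    have hcpos : 0 < c := Real.exp_pos _
    set w : EuclideanSpace ℝ (Fin d) → ℝ := fun x => c * u x with hwdef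
    have hdiffw : Differentiable ℝ w := hdiff.const_mul c
    have hw2 : MemLp w 2 volume := hu2.const_mul c
    have hfd : ∀ x, fderiv ℝ w x = c • fderiv ℝ u x := fun x =>
      fderiv_const_mul (hdiff x) c
    have hgw_fun : (fun x => ‖fderiv ℝ w x‖) = fun x => |c| * ‖fderiv ℝ u x‖ := by
      funext x
      rw [hfd x, norm_smul, Real.norm_eq_abs]
    have hgw : MemLp (fun x => ‖fderiv ℝ w x‖) 2 volume := by
      rw [hgw_fun]
      exact hgrad.const_mul _
    have hwne : w ≠ 0 := by
      intro h
      apply hune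
      funext x
      have hx := congrFun h x
      simp only [hwdef, Pi.zero_apply] at hx
      rcases mul_eq_zero.mp hx with h' | h'
      · exact absurd h' (ne_of_gt hcpos)
      · exact h'
    have hptw : ∀ x, Real.log |w x| * w x ^ 2
        = Real.log c * c ^ 2 * u x ^ 2 + c ^ 2 * (Real.log |u x| * u x ^ 2) := by
      intro x
      rcases eq_or_ne (u x) 0 with h | h
      · simp [hwdef, h]
      · simp only [hwdef]
        rw [abs_mul, abs_of_pos hcpos,
          Real.log_mul (ne_of_gt hcpos) (abs_ne_zero.mpr h)]
        ring
    have hwint : ¬ Integrable (fun x => Real.log |w x| * w x ^ 2) volume := by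
      intro hcontra
      apply hInt
      have h1 : Integrable (fun x => Real.log c * c ^ 2 * u x ^ 2
          + c ^ 2 * (Real.log |u x| * u x ^ 2)) volume := by
        have := funext hptw
        rwa [this] at hcontra
      have h2 : Integrable (fun x => c ^ 2 * (Real.log |u x| * u x ^ 2)) volume := by
        have h := h1.sub (husq.const_mul (Real.log c * c ^ 2))
        exact h.congr (Filter.Eventually.of_forall fun x => by
          simp only [Pi.sub_apply]; ring)
      have h3 := h2.const_mul ((c ^ 2)⁻¹)
      have hc2 : (c:ℝ) ^ 2 ≠ 0 := by positivity
      simpa [← mul_assoc, inv_mul_cancel₀ hc2] using h3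
    have hzero : (∫ x, Real.log |w x| * w x ^ 2) = 0 := integral_undef hwint
    have hw2sq : nrm d w 2 ^ 2 = c ^ 2 * N2 ^ 2 := by
      rw [nrm_two_sq hw2]
      simp only [hwdef, mul_pow]
      rw [integral_const_mul, ← hN2sq]
    have hwN2 : nrm d w 2 = c * N2 := by
      have h1 : (0:ℝ) ≤ nrm d w 2 := ENNReal.toReal_nonneg
      have h2 : nrm d w 2 ^ 2 = (c * N2) ^ 2 := by rw [hw2sq]; ring
      have h3 := congrArg Real.sqrt h2
      rwa [Real.sqrt_sq h1, Real.sqrt_sq (le_of_lt (mul_pos hcpos hN2))] at h3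
    have hgradw : gradNrm d w = c * G := by
      rw [gradNrm, hgw_fun]
      have heq : (fun x => |c| * ‖fderiv ℝ u x‖)
          = (|c| : ℝ) • (fun x => ‖fderiv ℝ u x‖) := rfl
      rw [heq, eLpNorm_const_smul]
      simp [NNReal.smul_def, ENNReal.toReal_smul, abs_of_pos hcpos, hGdef, gradNrm]
    have happ := hLogSob w hdiffw hw2 hgw hwne
    rw [hzero, zero_div, hwN2, hgradw] at happ
    have harg : C * (c * G) ^ 2 / (c * N2) ^ 2 = C * G ^ 2 / N2 ^ 2 := by
      field_simp [ne_of_gt hcpos, ne_of_gt hN2]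
    rw [harg, Real.log_mul (ne_of_gt hcpos) (ne_of_gt hN2)] at happ
    have hlogc : Real.log c = -K - 1 := by rw [hcdef, Real.log_exp]
    rw [hlogc] at happ
    rw [hKdef] at happ
    linarith
  -- Jensen step
  have hJensen : Real.log (N2 ^ 2 / N1) ≤ I / N2 ^ 2 := by
    set a : ℝ := N1 / N2 ^ 2 with hadef
    have ha : 0 < a := by positivity
    have hg_int : Integrable (fun x => (1 - Real.log a) * u x ^ 2 - a⁻¹ * |u x|) volume :=
      (husq.const_mul _).sub (huint.abs.const_mul _)
    have hmono : ∀ x, (1 - Real.log a) * u x ^ 2 - a⁻¹ * |u x| ≤ Real.log |u x| * u x ^ 2 := by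
      intro x
      have h := pointwise_log_bound |u x| a ha (abs_nonneg _)
      rwa [sq_abs] at h
    have hle : (∫ x, ((1 - Real.log a) * u x ^ 2 - a⁻¹ * |u x|)) ≤ I :=
      integral_mono hg_int hInt hmono
    have hcalc : (∫ x, ((1 - Real.log a) * u x ^ 2 - a⁻¹ * |u x|))
        = (1 - Real.log a) * N2 ^ 2 - a⁻¹ * N1 := by
      rw [integral_sub (husq.const_mul _) (huint.abs.const_mul _),
        integral_const_mul, integral_const_mul, ← hN2sq, ← hN1eq]
    have h1 : a⁻¹ * N1 = N2 ^ 2 := by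
      rw [hadef]; field_simp
    have h2 : Real.log (N2 ^ 2 / N1) = - Real.log a := by
      rw [hadef, ← Real.log_inv]
      congr 1
      field_simp
    rw [hcalc, h1] at hle
    have h3 : Real.log (N2 ^ 2 / N1) * N2 ^ 2 ≤ I := by
      rw [h2]
      have : -Real.log a * N2 ^ 2 = (1 - Real.log a) * N2 ^ 2 - N2 ^ 2 := by ring
      rw [this]
      exact hle
    calc Real.log (N2 ^ 2 / N1) = Real.log (N2 ^ 2 / N1) * N2 ^ 2 / N2 ^ 2 := by
          field_simp
    _ ≤ I / N2 ^ 2 := by gcongr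
  -- case G = 0 : contradiction via dilations
  rcases eq_or_lt_of_le (show (0:ℝ) ≤ G from ENNReal.toReal_nonneg) with hG | hG
  · exfalso
    have hGzero : eLpNorm (fun x => ‖fderiv ℝ u x‖) 2 volume = 0 := by
      have h0 : (eLpNorm (fun x => ‖fderiv ℝ u x‖) 2 volume).toReal = 0 := hG.symm
      rcases (ENNReal.toReal_eq_zero_iff _).mp h0 with h | h
      · exact h
      · exact absurd h hgrad.eLpNorm_ne_top
    have hg0 : (fun x => ‖fderiv ℝ u x‖) =ᵐ[volume] 0 :=
      (eLpNorm_eq_zero_iff hgrad.aestronglyMeasurable two_ne_zero).mp hGzero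
    set t : ℝ := (Real.log (N2 ^ 2) - 2 * (I / N2 ^ 2) + 1) / d with htdef
    set l : ℝ := Real.exp t with hldef
    have hlpos : 0 < l := Real.exp_pos _
    have hlne : l ≠ 0 := ne_of_gt hlpos
    set v : EuclideanSpace ℝ (Fin d) → ℝ := fun x => u (l • x) with hvdef
    have hTdiff : Differentiable ℝ (fun x : EuclideanSpace ℝ (Fin d) => l • x) :=
      differentiable_id.const_smul l
    have hdiffv : Differentiable ℝ v := hdiff.comp hTdiff
    have hvcont : Continuous v := hdiffv.continuous
    have hrank : Module.finrank ℝ (EuclideanSpace ℝ (Fin d)) = d :=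
      finrank_euclideanSpace_fin
    set m : ℝ := (l ^ d)⁻¹ with hmdef
    have hmpos : 0 < m := by positivity
    have hscale : ∀ f : EuclideanSpace ℝ (Fin d) → ℝ,
        (∫ x, f (l • x)) = m * ∫ x, f x := by
      intro f
      rw [Measure.integral_comp_smul volume f l, hrank, abs_of_nonneg (by positivity), smul_eq_mul,
        hmdef]
    have hvsq : Integrable (fun x => v x ^ 2) volume := by
      have h := (integrable_comp_smul_iff volume (fun y => u y ^ 2) hlne).mpr husq
      simpa [hvdef] using h
    have hv2 : MemLp v 2 volume :=
      (memLp_two_iff_integrable_sq hvcont.aestronglyMeasurable).mpr hvsq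
    have hfdv : ∀ x, ‖fderiv ℝ v x‖ = |l| * ‖fderiv ℝ u (l • x)‖ := by
      intro x
      have h1 : HasFDerivAt (fun x : EuclideanSpace ℝ (Fin d) => l • x)
          (l • ContinuousLinearMap.id ℝ (EuclideanSpace ℝ (Fin d))) x :=
        (hasFDerivAt_id x).const_smul l
      have h2 : HasFDerivAt u (fderiv ℝ u (l • x)) (l • x) := (hdiff (l • x)).hasFDerivAt
      have h3 : HasFDerivAt v ((fderiv ℝ u (l • x)).comp
          (l • ContinuousLinearMap.id ℝ (EuclideanSpace ℝ (Fin d)))) x := h2.comp x h1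
      have h4 : (fderiv ℝ u (l • x)).comp
          (l • ContinuousLinearMap.id ℝ (EuclideanSpace ℝ (Fin d)))
          = l • fderiv ℝ u (l • x) := by
        ext y
        simp
      rw [h3.fderiv, h4, norm_smul, Real.norm_eq_abs]
    have hqmp : Measure.QuasiMeasurePreserving
        (fun x : EuclideanSpace ℝ (Fin d) => l • x) volume volume :=
      Measure.quasiMeasurePreserving_smul volume hlne
    have hgv0 : (fun x => ‖fderiv ℝ v x‖) =ᵐ[volume] 0 := by
      have hcomp := hqmp.ae_eq_comp hg0
      filter_upwards [hcomp] with x hx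
      simp only [Function.comp_apply, Pi.zero_apply] at hx
      rw [Pi.zero_apply, hfdv x, hx, mul_zero]
    have hvgrad_mem : MemLp (fun x => ‖fderiv ℝ v x‖) 2 volume :=
      MemLp.zero.ae_eq hgv0.symm
    have hgradv0 : gradNrm d v = 0 := by
      rw [gradNrm, eLpNorm_congr_ae hgv0, eLpNorm_zero]
      simp
    have hvne : v ≠ 0 := by
      intro h
      apply hune
      funext y
      have hy := congrFun h (l⁻¹ • y)
      simpa [hvdef, smul_smul, mul_inv_cancel₀ hlne] using hy
    have hv2sq : nrm d v 2 ^ 2 = m * N2 ^ 2 := by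
      rw [nrm_two_sq hv2, hN2sq]
      simpa [hvdef] using hscale (fun y => u y ^ 2)
    have hIv : (∫ x, Real.log |v x| * v x ^ 2) = m * I := by
      have h := hscale (fun y => Real.log |u y| * u y ^ 2)
      rw [← hIdef] at h
      exact h
    have happ := hLogSob v hdiffv hv2 hvgrad_mem hvne
    rw [hIv, hv2sq, hgradv0] at happ
    have hL : m * I / (m * N2 ^ 2) = I / N2 ^ 2 :=
      mul_div_mul_left _ _ (ne_of_gt hmpos)
    have hR : C * (0:ℝ) ^ 2 / (m * N2 ^ 2) = 0 := by simp
    rw [hL, hR, Real.log_zero, mul_zero, add_zero] at happ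
    have hnv_ne : nrm d v 2 ≠ 0 := by
      intro h
      rw [h] at hv2sq
      nlinarith [hv2sq, mul_pos hmpos (pow_pos hN2 2)]
    have hnv_pos : 0 < nrm d v 2 :=
      lt_of_le_of_ne ENNReal.toReal_nonneg (Ne.symm hnv_ne)
    have hlog2 : 2 * Real.log (nrm d v 2) = Real.log (m * N2 ^ 2) := by
      rw [← hv2sq, Real.log_pow]
      push_cast
      ring
    have hlogm : Real.log m = -((d:ℝ) * t) := by
      rw [hmdef, Real.log_inv, Real.log_pow, hldef, Real.log_exp]
    have hfin : 2 * (I / N2 ^ 2) ≤ -((d:ℝ) * t) + Real.log (N2 ^ 2) := by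
      have hm2 := mul_le_mul_of_nonneg_left happ (by norm_num : (0:ℝ) ≤ 2)
      rw [hlog2, Real.log_mul (ne_of_gt hmpos) (by positivity), hlogm] at hm2
      linarith
    have hdt : (d:ℝ) * t = Real.log (N2 ^ 2) - 2 * (I / N2 ^ 2) + 1 := by
      rw [htdef]
      field_simp
    linarith
  -- main case
  have hlog := hLogSob u hdiff hu2 hgrad hune
  rw [← hIdef] at hlog
  have hchain : 2 * Real.log N2 - Real.log N1 ≤
      Real.log N2 + ((d:ℝ)/4) * (Real.log C + 2 * Real.log G - 2 * Real.log N2) := by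
    have e1 : Real.log (N2 ^ 2 / N1) = 2 * Real.log N2 - Real.log N1 := by
      rw [Real.log_div (by positivity) (ne_of_gt hN1), Real.log_pow]
      norm_num
    have e2 : Real.log (C * G ^ 2 / N2 ^ 2) =
        Real.log C + 2 * Real.log G - 2 * Real.log N2 := by
      rw [Real.log_div (by positivity) (by positivity), Real.log_mul (ne_of_gt hCpos) (by positivity),
        Real.log_pow, Real.log_pow]
      push_cast
      ring
    rw [e1] at hJensen
    rw [e2] at hlog
    linarith
  -- conclude by exponentiation
  have hmain : ((2:ℝ) + 4 / d) * Real.log N2 ≤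
      Real.log C + (4 / d) * Real.log N1 + 2 * Real.log G := by
    have h4d : (0:ℝ) < 4 / d := by positivity
    have hm := mul_le_mul_of_nonneg_left hchain (le_of_lt h4d)
    have heq : (4 / (d:ℝ)) * (Real.log N2 + ((d:ℝ)/4) * (Real.log C + 2 * Real.log G - 2 * Real.log N2))
        = (4 / (d:ℝ)) * Real.log N2 + (Real.log C + 2 * Real.log G - 2 * Real.log N2) := by
      field_simp
    rw [heq] at hm
    have hexp : (4 / (d:ℝ)) * (2 * Real.log N2 - Real.log N1)
        = 2 * ((4 / (d:ℝ)) * Real.log N2) - (4 / (d:ℝ)) * Real.log N1 := by ring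
    rw [hexp] at hm
    nlinarith [hm]
  have hRpos : 0 < C * N1 ^ ((4:ℝ)/d) * G ^ 2 := by
    have : 0 < N1 ^ ((4:ℝ)/d) := Real.rpow_pos_of_pos hN1 _
    positivity
  have hLHS : N2 ^ ((2:ℝ) + 4 / d) = Real.exp (((2:ℝ) + 4 / d) * Real.log N2) := by
    rw [Real.rpow_def_of_pos hN2]
    ring_nf
  rw [hLHS, ← Real.exp_log hRpos]
  apply Real.exp_le_exp.mpr
  rw [Real.log_mul (ne_of_gt (by positivity : (0:ℝ) < C * N1 ^ ((4:ℝ)/d))) (by positivity),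
    Real.log_mul (ne_of_gt hCpos) (ne_of_gt (Real.rpow_pos_of_pos hN1 _)),
    Real.log_rpow hN1, Real.log_pow]
  push_cast
  linarith [hmain]
end
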